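/- Let D be a digraph with designated vertices s and t such that D has an out-branching rooted at s and an in-branching rooted at t, let (T̂, {B_x}) be the s-rooted cut decomposition of D, and let P̂ = x_1...x_ℓ be a degenerate path of T̂. Then every out-branching of D rooted at s contains all arcs of P̂. -/

import Mathlib

namespace CutPaper

variable {V : Type*}

/-- A directed path in the digraph `A`, given as a nonempty list of distinct
vertices from `u` to `v` with consecutive vertices joined by arcs. -/
def IsPath (A : V → V → Prop) (p : List V) (u v : V) : Prop :=
  p.Chain' A ∧ p.head? = some u ∧ p.getLast? = some v ∧ p.Nodup

/-- `v` is reachable from `u` in the digraph `A`. -/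
def Reaches (A : V → V → Prop) (u v : V) : Prop := ∃ p, IsPath A p u v

/-- Two paths from `r` to `v` are internally disjoint: they share only `r` and `v`. -/
def IntDisj (p q : List V) (r v : V) : Prop :=
  ∀ x, x ∈ p → x ∈ q → x = r ∨ x = v

/-- `v` is bi-reachable from `r`: there are two (distinct) internally
vertex-disjoint paths from `r` to `v`. -/
def BiReachable (A : V → V → Prop) (r v : V) : Prop :=
  ∃ p q, p ≠ q ∧ IsPath A p r v ∧ IsPath A q r v ∧ IntDisj p q r v

/-- The diblock of `r`: bi-reachable vertices together with `r` and its out-neighbours. -/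
def diblock (A : V → V → Prop) (r : V) : Set V :=
  {v | BiReachable A r v} ∪ {r} ∪ {v | A r v}

/-- The subdigraph of `A` induced on a vertex set `S`. -/
def Asub (A : V → V → Prop) (S : Set V) : V → V → Prop :=
  fun u v => A u v ∧ u ∈ S ∧ v ∈ S

/-- The path `p` meets the set `B` for the last time in `x`. -/
def LastTouch (B : Set V) (p : List V) (x : V) : Prop :=
  ∃ p₁ p₂, p = p₁ ++ x :: p₂ ∧ x ∈ B ∧ ∀ y ∈ p₂, y ∉ B

/-- `T` is an out-tree with vertex set `S` and root `r`, as a subdigraph of `A`. -/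
structure IsOutTree (A T : V → V → Prop) (S : Set V) (r : V) : Prop where
  sub : ∀ u v, T u v → A u v
  mem : ∀ u v, T u v → u ∈ S ∧ v ∈ S
  root_mem : r ∈ S
  no_in_root : ∀ u, ¬ T u r
  unique_in : ∀ v ∈ S, v ≠ r → ∃! u, T u v
  reach : ∀ v ∈ S, Reaches T r v

/-- `T` is an in-tree with vertex set `S` and root `r`, as a subdigraph of `A`. -/
def IsInTree (A T : V → V → Prop) (S : Set V) (r : V) : Prop :=
  IsOutTree (fun u v => A v u) (fun u v => T v u) S r

/-- The leaves (vertices of out-degree zero) of an out-tree `T` on vertex set `S`. -/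
def leaves (T : V → V → Prop) (S : Set V) : Set V :=
  {v | v ∈ S ∧ ∀ u, ¬ T v u}

/-- The leaves (vertices of in-degree zero) of an in-tree `T` on vertex set `S`. -/
def inLeaves (T : V → V → Prop) (S : Set V) : Set V :=
  {v | v ∈ S ∧ ∀ u, ¬ T u v}

/-- The raw data of a rooted cut decomposition: a node set, a parent map,
and an assignment of diblocks to nodes. -/
structure PreDecomp (V : Type*) where
  N : Set V
  parent : V → V
  B : V → Set V

/-- One step up the decomposition tree rooted at `r`. -/
def Step (d : PreDecomp V) (r : V) (a b : V) : Prop :=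
  a ∈ d.N ∧ a ≠ r ∧ d.parent a = b

/-- `x` is an ancestor (not necessarily proper) of `y` in the decomposition tree. -/
def Anc (d : PreDecomp V) (r : V) (x y : V) : Prop :=
  Relation.ReflTransGen (Step d r) y x

/-- `y` is a child of `x` in the decomposition tree. -/
def IsChild (d : PreDecomp V) (r : V) (y x : V) : Prop :=
  y ∈ d.N ∧ y ≠ r ∧ d.parent y = x

/-- `B*_x`: the union of the diblocks over the subtree rooted at `x`. -/
def Bstar (d : PreDecomp V) (r : V) (x : V) : Set V :=
  {v | ∃ y ∈ d.N, Anc d r x y ∧ v ∈ d.B y}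

/-- The partition class `X_y` of a bottleneck `y` of the diblock of `x`
inside `B*_x`: the vertices below `B x` whose access paths from `x`
leave `B x` for the last time at `y`. -/
def PartClass (A : V → V → Prop) (d : PreDecomp V) (r x y : V) : Set V :=
  {v | v ∈ Bstar d r x ∧ v ∉ d.B x ∧
    ∀ p, IsPath (Asub A (Bstar d r x)) p x v → LastTouch (d.B x) p y}

/-- `d` is the `r`-rooted cut decomposition of the digraph `A`:
the tree is well-founded towards the root `r`, the diblocks cover all vertices,
each `B x` is the diblock of `x` in the subdigraph induced on `B*_x`,
the children of `x` are exactly the bottlenecks of `B x`, and the subtree of a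
child `y` spans exactly `{y}` together with the partition class of `y`. -/
structure IsCutDecomp (A : V → V → Prop) (r : V) (d : PreDecomp V) : Prop where
  root_mem : r ∈ d.N
  parent_mem : ∀ x ∈ d.N, x ≠ r → d.parent x ∈ d.N
  tree : ∀ x ∈ d.N, Anc d r r x
  cover : Bstar d r r = Set.univ
  diblock_eq : ∀ x ∈ d.N, d.B x = diblock (Asub A (Bstar d r x)) x
  child_iff : ∀ x ∈ d.N, ∀ y,
    IsChild d r y x ↔ (y ∈ d.B x ∧ y ≠ x ∧ (PartClass A d r x y).Nonempty)
  child_part : ∀ x ∈ d.N, ∀ y, IsChild d r y x →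
    Bstar d r y = insert y (PartClass A d r x y)


/-! ### Auxiliary lemmas for Statement 16 -/

section Aux

variable {A : V → V → Prop} {d : PreDecomp V} {s : V}

private lemma split_eq {α : Type*} {B : Set α} {p1 p2 q1 q2 : List α} {y y' : α}
    (e : p1 ++ y :: p2 = q1 ++ y' :: q2)
    (hy : y ∈ B) (hy' : y' ∈ B)
    (h2 : ∀ z ∈ p2, z ∉ B) (h2' : ∀ z ∈ q2, z ∉ B) : y = y' := by
  rcases List.append_eq_append_iff.mp e with ⟨r, hq1, hr⟩ | ⟨r, hp1, hr⟩
  · cases r with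
    | nil =>
      simp only [List.nil_append] at hr
      exact (List.cons_eq_cons.mp hr).1
    | cons c r' =>
      simp only [List.cons_append] at hr
      obtain ⟨rfl, hp2⟩ := List.cons_eq_cons.mp hr
      exact absurd hy' (h2 y' (by simp [hp2]))
  · cases r with
    | nil =>
      simp only [List.nil_append] at hr
      exact ((List.cons_eq_cons.mp hr).1).symm
    | cons c r' =>
      simp only [List.cons_append] at hr
      obtain ⟨rfl, hq2e⟩ := List.cons_eq_cons.mp hr
      exact absurd hy (h2' y (by simp [hq2e]))

private lemma chain'_last_pair {α : Type*} {R : α → α → Prop} :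
    ∀ (l : List α) {w b : α}, List.Chain' R (l ++ [w, b]) → R w b := by
  intro l
  induction l with
  | nil => intro w b hc; exact (List.isChain_cons_cons.mp hc).1
  | cons a l ih => intro w b hc; exact ih (hc.tail)

private lemma head?_append_left {α : Type*} {l l' : List α} (h : l ≠ []) :
    (l ++ l').head? = l.head? := by
  cases l with
  | nil => exact absurd rfl h
  | cons a t => rfl

private lemma two_le_length {α : Type*} {l : List α} {u v : α}
    (h1 : l.head? = some u) (h2 : l.getLast? = some v) (h3 : u ≠ v) : 2 ≤ l.length := by
  match l with
  | [] => simp at h1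
  | [a] =>
    simp only [List.head?_cons, Option.some.injEq] at h1
    simp only [List.getLast?_singleton, Option.some.injEq] at h2
    exact absurd (h1.symm.trans h2) h3
  | a :: b :: t => simp only [List.length_cons]; omega

private lemma getLast?_decomp {α : Type*} {l : List α} {v : α}
    (h : l.getLast? = some v) : ∃ l', l = l' ++ [v] := by
  rcases List.eq_nil_or_concat l with rfl | ⟨L, b, rfl⟩
  · simp at h
  · rw [List.concat_eq_append, List.getLast?_concat] at h
    injection h with h
    exact ⟨L, by rw [List.concat_eq_append, h]⟩

private lemma chain'_asub_mem {S : Set V} :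
    ∀ (l : List V), List.Chain' (Asub A S) l → 2 ≤ l.length → ∀ z ∈ l, z ∈ S := by
  intro l
  induction l with
  | nil => simp
  | cons a t ih =>
    intro hc hl z hz
    cases t with
    | nil => simp at hl
    | cons b t' =>
      have hab : Asub A S a b := (List.isChain_cons_cons.mp hc).1
      rcases List.mem_cons.mp hz with rfl | hz'
      · exact hab.2.1
      · cases t' with
        | nil =>
          rcases List.mem_singleton.mp (by simpa using hz') with rfl
          exact hab.2.2
        | cons c t'' =>
          exact ih hc.tail (by simp only [List.length_cons]; omega) z hz'

private lemma chain'_asub_mono {S S' : Set V} :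
    ∀ (l : List V), List.Chain' (Asub A S) l → (∀ z ∈ l, z ∈ S') →
      List.Chain' (Asub A S') l := by
  intro l
  induction l with
  | nil => intro _ _; exact List.isChain_nil
  | cons a t ih =>
    intro hc hm
    cases t with
    | nil => exact List.isChain_singleton a
    | cons b t' =>
      simp only [List.Chain', List.isChain_cons_cons] at hc ⊢
      exact ⟨⟨hc.1.1, hm a (by simp), hm b (by simp)⟩,
        ih hc.2 fun z hz => hm z (List.mem_cons_of_mem _ hz)⟩

private lemma mem_B_self (h : IsCutDecomp A s d) {x : V} (hx : x ∈ d.N) : x ∈ d.B x := by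
  rw [h.diblock_eq x hx]
  exact Or.inl (Or.inr rfl)

private lemma mem_Bstar_self (h : IsCutDecomp A s d) {x : V} (hx : x ∈ d.N) :
    x ∈ Bstar d s x :=
  ⟨x, hx, Relation.ReflTransGen.refl, mem_B_self h hx⟩

private lemma child_step {x y : V} (hc : IsChild d s y x) : Step d s y x :=
  ⟨hc.1, hc.2.1, hc.2.2⟩

private lemma part_lemma (h : IsCutDecomp A s d) {x w : V} (hx : x ∈ d.N)
    (hw : w ∈ Bstar d s x) (hwB : w ∉ d.B x) :
    ∃ y, IsChild d s y x ∧ w ∈ PartClass A d s x y := by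
  obtain ⟨z, hz, hanc, hB⟩ := hw
  rcases Relation.ReflTransGen.cases_tail hanc with heq | ⟨c, hzc, hcx⟩
  · exact absurd (heq ▸ hB) hwB
  · have hc : IsChild d s c x := ⟨hcx.1, hcx.2.1, hcx.2.2⟩
    have hwc : w ∈ Bstar d s c := ⟨z, hz, hzc, hB⟩
    rw [h.child_part x hx c hc] at hwc
    rcases hwc with rfl | hwp
    · exact absurd ((h.child_iff x hx w).mp hc).1 hwB
    · exact ⟨c, hc, hwp⟩

/-- The key invariant: every path from the root `s` to a vertex of `B*_x`
has a suffix which is a path from `x` inside `B*_x`. -/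
private def GoodNode (A : V → V → Prop) (d : PreDecomp V) (s x : V) : Prop :=
  ∀ v ∈ Bstar d s x, ∀ p : List V, IsPath A p s v →
    ∃ q0 q, p = q0 ++ q ∧ IsPath (Asub A (Bstar d s x)) q x v

private lemma good_root (h : IsCutDecomp A s d) : GoodNode A d s s := by
  intro v _ p hp
  refine ⟨[], p, rfl, ?_, hp.2.1, hp.2.2.1, hp.2.2.2⟩
  rw [h.cover]
  exact hp.1.imp fun a b hab => ⟨hab, trivial, trivial⟩

private lemma good_child (h : IsCutDecomp A s d) {x y : V} (hx : x ∈ d.N)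
    (hc : IsChild d s y x) (hg : GoodNode A d s x) : GoodNode A d s y := by
  intro v hv p hp
  rw [h.child_part x hx y hc] at hv
  rcases hv with rfl | hvp
  · -- v = y : take the suffix `[y]`
    obtain ⟨p0, rfl⟩ := getLast?_decomp hp.2.2.1
    exact ⟨p0, [v], rfl, List.isChain_singleton v, rfl, rfl, List.nodup_singleton v⟩
  · -- v is in the partition class of y
    obtain ⟨q0, q, rfl, hq⟩ := hg v hvp.1 p hp
    obtain ⟨q1, q2, hqe, hyB, hq2⟩ := hvp.2.2 q hq
    have hxv : x ≠ v := fun e => hvp.2.1 (e ▸ mem_B_self h hx)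
    have hqlen : 2 ≤ q.length := two_le_length hq.2.1 hq.2.2.1 hxv
    have hq2sub : ∀ z ∈ q2, z ∈ Bstar d s x := by
      intro z hz
      exact chain'_asub_mem q hq.1 hqlen z (by simp [hqe, hz])
    have key : ∀ z ∈ q2, z ∈ PartClass A d s x y := by
      intro z hz
      obtain ⟨y', hy', hzp⟩ := part_lemma h hx (hq2sub z hz) (hq2 z hz)
      obtain ⟨r1, r2, hsplit⟩ := List.append_of_mem hz
      -- the prefix of q ending at z is a path from x to z inside B*_x
      have hqπ : q = (q1 ++ y :: r1 ++ [z]) ++ r2 := by simp [hqe, hsplit]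
      have hπpre : (q1 ++ y :: r1 ++ [z]) <+: q := ⟨r2, hqπ.symm⟩
      have hπ : IsPath (Asub A (Bstar d s x)) (q1 ++ y :: r1 ++ [z]) x z := by
        refine ⟨hq.1.prefix hπpre, ?_, ?_, hq.2.2.2.sublist hπpre.sublist⟩
        · rw [← head?_append_left (l := q1 ++ y :: r1 ++ [z]) (l' := r2) (by simp), ← hqπ]
          exact hq.2.1
        · exact List.getLast?_concat
      obtain ⟨c1, c2, hce, hy'B, hc2⟩ := hzp.2.2 _ hπ
      have h2 : ∀ w ∈ r1 ++ [z], w ∉ d.B x := by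
        intro w hw
        rcases List.mem_append.mp hw with hw | hw
        · exact hq2 w (by simp [hsplit, hw])
        · rcases List.mem_singleton.mp hw with rfl
          exact hq2 w (by simp [hsplit])
      have hyy' : y = y' := split_eq (by simpa using hce) hyB hy'B h2 hc2
      exact hyy' ▸ hzp
    refine ⟨q0 ++ q1, y :: q2, by rw [hqe, List.append_assoc], ?_, rfl, ?_, ?_⟩
    · -- chain in B*_y
      have hsuf : (y :: q2) <:+ q := ⟨q1, hqe.symm⟩
      refine chain'_asub_mono _ (hq.1.suffix hsuf) ?_
      intro z hz
      rcases List.mem_cons.mp hz with rfl | hz'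
      · exact mem_Bstar_self h hc.1
      · rw [h.child_part x hx y hc]
        exact Or.inr (key z hz')
    · have hql := hq.2.2.1
      rw [hqe, List.getLast?_append_of_ne_nil _ (List.cons_ne_nil _ _)] at hql
      exact hql
    · exact hq.2.2.2.sublist (List.IsSuffix.sublist ⟨q1, hqe.symm⟩)

private lemma good_all (h : IsCutDecomp A s d) :
    ∀ x, Relation.ReflTransGen (Step d s) x s → x ∈ d.N → GoodNode A d s x := by
  intro x hrt
  induction hrt using Relation.ReflTransGen.head_induction_on with
  | refl => exact fun _ => good_root h
  | head hstep hrt2 ih =>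
    intro hxN
    obtain ⟨haN, has, hpar⟩ := hstep
    have hcN : d.parent _ ∈ d.N := h.parent_mem _ haN has
    exact good_child h (hpar ▸ hcN) ⟨haN, has, hpar⟩ (ih (hpar ▸ hcN))

private lemma key_arc [Finite V] (h : IsCutDecomp A s d) {a b : V} (haN : a ∈ d.N)
    (hc : IsChild d s b a) (hcard : (d.B a).ncard = 2)
    {T : V → V → Prop} (hT : IsOutTree A T Set.univ s) : T a b := by
  have hbB : b ∈ d.B a := ((h.child_iff a haN b).mp hc).1
  have hba : b ≠ a := ((h.child_iff a haN b).mp hc).2.1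
  have hBa : d.B a = {a, b} := by
    have hsub : ({a, b} : Set V) ⊆ d.B a := by
      rintro z (rfl | rfl)
      exacts [mem_B_self h haN, hbB]
    exact (Set.eq_of_subset_of_ncard_le hsub
      (by rw [hcard, Set.ncard_pair (Ne.symm hba)]) (d.B a).toFinite).symm
  obtain ⟨p, hp⟩ := hT.reach b trivial
  have hpA : IsPath A p s b :=
    ⟨hp.1.imp fun u v huv => hT.sub u v huv, hp.2.1, hp.2.2.1, hp.2.2.2⟩
  have hbBs : b ∈ Bstar d s a :=
    ⟨b, hc.1, Relation.ReflTransGen.single (child_step hc), mem_B_self h hc.1⟩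
  obtain ⟨q0, q, rfl, hq⟩ := good_all h a (h.tree a haN) haN b hbBs p hpA
  obtain ⟨q', rfl⟩ := getLast?_decomp hq.2.2.1
  have hq'ne : q' ≠ [] := by
    rintro rfl
    exact hba (by simpa using hq.2.1)
  rcases List.eq_nil_or_concat q' with rfl | ⟨q'', w, hq'⟩
  · exact absurd rfl hq'ne
  rw [List.concat_eq_append] at hq'
  subst hq' 
  have hq_eq : q'' ++ [w] ++ [b] = q'' ++ [w, b] := by simp
  have harc : Asub A (Bstar d s a) w b := chain'_last_pair q'' (hq_eq ▸ hq.1)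
  by_cases hwa : w = a
  · subst hwa
    have hpe : q0 ++ (q'' ++ [w] ++ [b]) = (q0 ++ q'') ++ [w, b] := by simp
    exact chain'_last_pair (q0 ++ q'') (hpe ▸ hp.1)
  · exfalso
    have hwb : w ≠ b := by
      intro e
      have hwmem : w ∈ q'' ++ [w] := by simp
      exact (List.disjoint_of_nodup_append hq.2.2.2) hwmem (by simp [e])
    have hwB : w ∉ d.B a := by
      rw [hBa]
      rintro (rfl | rfl)
      exacts [hwa rfl, hwb rfl]
    obtain ⟨y', hy', hwp⟩ := part_lemma h haN harc.2.1 hwB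
    have hy'b : y' = b := by
      have h1 := (h.child_iff a haN y').mp hy'
      have h2 : y' ∈ ({a, b} : Set V) := hBa ▸ h1.1
      rcases h2 with rfl | rfl
      · exact absurd rfl h1.2.1
      · rfl
    rw [hy'b] at hwp
    have hπpre : (q'' ++ [w]) <+: (q'' ++ [w] ++ [b]) := ⟨[b], rfl⟩
    have hπ : IsPath (Asub A (Bstar d s a)) (q'' ++ [w]) a w := by
      refine ⟨hq.1.prefix hπpre, ?_, List.getLast?_concat, hq.2.2.2.sublist hπpre.sublist⟩
      rw [← head?_append_left (l := q'' ++ [w]) (l' := [b]) (by simp)]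
      exact hq.2.1
    obtain ⟨c1, c2, hce, _, _⟩ := hwp.2.2 _ hπ
    have hbmem : b ∈ q'' ++ [w] := by rw [hce]; simp
    exact (List.disjoint_of_nodup_append hq.2.2.2) hbmem (List.mem_singleton_self b)

end Aux

/-- every out-branching rooted at `s` contains all arcs of a
degenerate path of the decomposition tree (a monotone path all of whose
diblocks are degenerate, i.e. belong to internal nodes and have exactly two
vertices). -/
theorem degenerate_path_in_outBranchings {V : Type*} [Fintype V]
    (A : V → V → Prop) (s t : V)
    (Tb Ti : V → V → Prop)
    (hout : IsOutTree A Tb Set.univ s) (hin : IsInTree A Ti Set.univ t)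
    (d : PreDecomp V) (h : IsCutDecomp A s d)
    (P : List V) (hchain : List.Chain' (fun a b => IsChild d s b a) P)
    (hdeg : ∀ x ∈ P, x ∈ d.N ∧ (∃ y, IsChild d s y x) ∧ (d.B x).ncard = 2)
    (T : V → V → Prop) (hT : IsOutTree A T Set.univ s) :
    List.Chain' T P := by
  suffices H : ∀ L : List V, List.Chain' (fun a b => IsChild d s b a) L →
      (∀ x ∈ L, x ∈ d.N ∧ (∃ y, IsChild d s y x) ∧ (d.B x).ncard = 2) →
      List.Chain' T L from H P hchain hdeg
  intro L
  induction L with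
  | nil => intro _ _; exact List.isChain_nil
  | cons a L ih =>
    intro hch hdg
    cases L with
    | nil => exact List.isChain_singleton a
    | cons b L' =>
      simp only [List.Chain', List.isChain_cons_cons] at hch ⊢
      refine ⟨key_arc h (hdg a (by simp)).1 hch.1 (hdg a (by simp)).2.2 hT, ?_⟩
      exact ih hch.2 fun x hx => hdg x (List.mem_cons_of_mem _ hx)

end CutPaper
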